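/- Let W, X, Y, Z be Banach lattices with X, Y, Z Dedekind complete. For positive operators A ∈ L^r(Y,Z) and B ∈ L^r(W,X), the operator norm of M_{A,B} satisfies ‖M_{A,B}‖ = ‖A‖·‖B‖, where M_{A,B} acts between the Banach lattices (L^r(X,Y), ‖·‖_r) and (L^r(W,Z), ‖·‖_r). -/

import Mathlib

open Set Filter

namespace TwoSided

section Defs

variable {E F : Type*}
  [AddCommGroup E] [Lattice E] [Module ℝ E]
  [AddCommGroup F] [Lattice F] [Module ℝ F]

/-- A linear operator between ordered vector spaces is positive if it maps the
positive cone into the positive cone. -/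
def Positive (T : E →ₗ[ℝ] F) : Prop := ∀ x : E, 0 ≤ x → 0 ≤ T x

/-- A regular operator is a difference of two positive operators. -/
def IsRegular (T : E →ₗ[ℝ] F) : Prop :=
  ∃ P Q : E →ₗ[ℝ] F, Positive P ∧ Positive Q ∧ T = P - Q

/-- `U` is the supremum of `S` and `T` in the operator order. -/
def IsOpSup (S T U : E →ₗ[ℝ] F) : Prop :=
  Positive (U - S) ∧ Positive (U - T) ∧
    ∀ V : E →ₗ[ℝ] F, Positive (V - S) → Positive (V - T) → Positive (V - U)

/-- `U` is the infimum of `S` and `T` in the operator order. -/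
def IsOpInf (S T U : E →ₗ[ℝ] F) : Prop :=
  Positive (S - U) ∧ Positive (T - U) ∧
    ∀ V : E →ₗ[ℝ] F, Positive (S - V) → Positive (T - V) → Positive (U - V)

/-- `U` is the least upper bound of the set `s` of operators in the operator order. -/
def IsOpLUB (s : Set (E →ₗ[ℝ] F)) (U : E →ₗ[ℝ] F) : Prop :=
  (∀ C ∈ s, Positive (U - C)) ∧
    ∀ V : E →ₗ[ℝ] F, (∀ C ∈ s, Positive (V - C)) → Positive (V - U)

/-- `M` is the modulus `|T| = T ⊔ (-T)` of the operator `T`. -/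
def IsModulus (T M : E →ₗ[ℝ] F) : Prop := IsOpSup T (-T) M

/-- An operator is order continuous if it maps nets decreasing to `0`
to nets order converging to `0`. -/
def OrdContinuous (T : E →ₗ[ℝ] F) : Prop :=
  ∀ (ι : Type) [SemilatticeSup ι] [Nonempty ι] (a : ι → E),
    Antitone a → IsGLB (Set.range a) 0 →
      ∃ b : ι → F, Antitone b ∧ IsGLB (Set.range b) 0 ∧
        ∀ i, T (a i) ≤ b i ∧ -(T (a i)) ≤ b i

/-- A lattice is Dedekind complete if every nonempty set bounded above has a
least upper bound. -/
def DedekindComplete (G : Type*) [Preorder G] : Prop :=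
  ∀ s : Set G, s.Nonempty → BddAbove s → ∃ a, IsLUB s a

end Defs

section Two

variable {W X Y Z : Type*}
  [AddCommGroup W] [Lattice W] [Module ℝ W]
  [AddCommGroup X] [Lattice X] [Module ℝ X]
  [AddCommGroup Y] [Lattice Y] [Module ℝ Y]
  [AddCommGroup Z] [Lattice Z] [Module ℝ Z]

/-- The two-sided multiplication operator `T ↦ A ∘ T ∘ B`. -/
def MAB (A : Y →ₗ[ℝ] Z) (B : W →ₗ[ℝ] X) :
    (X →ₗ[ℝ] Y) →ₗ[ℝ] (W →ₗ[ℝ] Z) where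
  toFun T := A ∘ₗ T ∘ₗ B
  map_add' := by intro S T; ext w; simp
  map_smul' := by intro c T; ext w; simp

/-- Positivity for operators between spaces of operators, with respect to the
operator order. -/
def Positive2 (Φ : (X →ₗ[ℝ] Y) →ₗ[ℝ] (W →ₗ[ℝ] Z)) : Prop :=
  ∀ T : X →ₗ[ℝ] Y, Positive T → Positive (Φ T)

def IsRegular2 (Φ : (X →ₗ[ℝ] Y) →ₗ[ℝ] (W →ₗ[ℝ] Z)) : Prop :=
  ∃ Φ₁ Φ₂, Positive2 (W := W) (X := X) (Y := Y) (Z := Z) Φ₁ ∧ Positive2 Φ₂ ∧ Φ = Φ₁ - Φ₂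

def IsOpSup2 (Φ Ψ Θ : (X →ₗ[ℝ] Y) →ₗ[ℝ] (W →ₗ[ℝ] Z)) : Prop :=
  Positive2 (Θ - Φ) ∧ Positive2 (Θ - Ψ) ∧
    ∀ Ξ : (X →ₗ[ℝ] Y) →ₗ[ℝ] (W →ₗ[ℝ] Z),
      Positive2 (Ξ - Φ) → Positive2 (Ξ - Ψ) → Positive2 (Ξ - Θ)

def IsOpInf2 (Φ Ψ Θ : (X →ₗ[ℝ] Y) →ₗ[ℝ] (W →ₗ[ℝ] Z)) : Prop :=
  Positive2 (Φ - Θ) ∧ Positive2 (Ψ - Θ) ∧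
    ∀ Ξ : (X →ₗ[ℝ] Y) →ₗ[ℝ] (W →ₗ[ℝ] Z),
      Positive2 (Φ - Ξ) → Positive2 (Ψ - Ξ) → Positive2 (Θ - Ξ)

def IsModulus2 (Φ M : (X →ₗ[ℝ] Y) →ₗ[ℝ] (W →ₗ[ℝ] Z)) : Prop := IsOpSup2 Φ (-Φ) M

end Two

end TwoSided

namespace TwoSided

section NormDefs

variable {E F : Type*}
  [NormedAddCommGroup E] [Lattice E] [HasSolidNorm E] [IsOrderedAddMonoid E] [NormedSpace ℝ E]
  [NormedAddCommGroup F] [Lattice F] [HasSolidNorm F] [IsOrderedAddMonoid F] [NormedSpace ℝ F]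

/-- The operator norm of a (not necessarily continuous) linear map. -/
noncomputable def opNorm (T : E →ₗ[ℝ] F) : ℝ :=
  sSup ((fun x => ‖T x‖) '' Metric.closedBall (0 : E) 1)

/-- The regular norm `‖T‖ᵣ = ‖|T|‖` of a regular operator. -/
noncomputable def regNorm (T : E →ₗ[ℝ] F) : ℝ :=
  sSup { c | ∃ M : E →ₗ[ℝ] F, IsModulus T M ∧ c = opNorm M }

/-- A Banach lattice has order continuous norm if every net decreasing to `0`
converges to `0` in norm. -/
def OrderContinuousNorm (G : Type*) [NormedAddCommGroup G] [Lattice G] [HasSolidNorm G] [IsOrderedAddMonoid G] : Prop :=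
  ∀ (ι : Type) [SemilatticeSup ι] [Nonempty ι] (a : ι → G),
    Antitone a → IsGLB (Set.range a) 0 →
      Filter.Tendsto (fun i => ‖a i‖) Filter.atTop (nhds 0)

end NormDefs

section NormTwo

variable {W X Y Z : Type*}
  [NormedAddCommGroup W] [Lattice W] [HasSolidNorm W] [IsOrderedAddMonoid W] [NormedSpace ℝ W]
  [NormedAddCommGroup X] [Lattice X] [HasSolidNorm X] [IsOrderedAddMonoid X] [NormedSpace ℝ X]
  [NormedAddCommGroup Y] [Lattice Y] [HasSolidNorm Y] [IsOrderedAddMonoid Y] [NormedSpace ℝ Y]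
  [NormedAddCommGroup Z] [Lattice Z] [HasSolidNorm Z] [IsOrderedAddMonoid Z] [NormedSpace ℝ Z]

/-- The operator norm of `Φ : Lʳ(X,Y) → Lʳ(W,Z)` with respect to the regular
norms on the spaces of regular operators. -/
noncomputable def opNorm2 (Φ : (X →ₗ[ℝ] Y) →ₗ[ℝ] (W →ₗ[ℝ] Z)) : ℝ :=
  sSup ((fun T => regNorm (Φ T)) '' { T : X →ₗ[ℝ] Y | IsRegular T ∧ regNorm T ≤ 1 })

/-- The regular norm `‖Φ‖ᵣ = ‖|Φ|‖` of a regular operator between spaces of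
regular operators, each endowed with its regular norm. -/
noncomputable def regNorm2 (Φ : (X →ₗ[ℝ] Y) →ₗ[ℝ] (W →ₗ[ℝ] Z)) : ℝ :=
  sSup { c | ∃ Ψ, IsModulus2 Φ Ψ ∧ c = opNorm2 Ψ }

end NormTwo

end TwoSided



section LatticeAux
set_option linter.unusedSectionVars false

variable {G : Type*} [Lattice G] [AddCommGroup G] [CovariantClass G G (· + ·) (· ≤ ·)]

lemma abs_eq_sup_neg' (a : G) : |a| = a ⊔ -a := rfl

lemma posPart_add_le' (a b : G) : (a + b)⁺ ≤ a⁺ + b⁺ := by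
  rw [posPart_def]
  exact sup_le (add_le_add (le_posPart a) (le_posPart b))
    (add_nonneg (posPart_nonneg a) (posPart_nonneg b))

lemma inf_add_le' (a b c : G) (ha : 0 ≤ a) (hb : 0 ≤ b) (hc : 0 ≤ c) :
    a ⊓ (b + c) ≤ a ⊓ b + (a ⊓ c) := by
  calc a ⊓ (b + c) ≤ ((a + a) ⊓ (a + c)) ⊓ ((b + a) ⊓ (b + c)) := by
        refine le_inf (le_inf ?_ ?_) (le_inf ?_ ?_)
        · exact inf_le_left.trans (le_add_of_nonneg_right ha)
        · exact inf_le_left.trans (le_add_of_nonneg_right hc)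
        · exact inf_le_left.trans (le_add_of_nonneg_left hb)
        · exact inf_le_right
    _ = a ⊓ b + (a ⊓ c) := by rw [inf_add, add_inf, add_inf]

lemma disjoint_nsmul' (a b : G) (ha : 0 ≤ a) (hb : 0 ≤ b) (hab : a ⊓ b = 0) (n : ℕ) :
    a ⊓ (n • b) = 0 := by
  induction n with
  | zero => simpa using inf_eq_right.mpr ha
  | succ n ih =>
      have h1 : a ⊓ ((n + 1) • b) ≤ a ⊓ (n • b) + (a ⊓ b) := by
        rw [succ_nsmul]
        exact inf_add_le' a (n • b) b ha (nsmul_nonneg hb n) hb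
      have h2 : 0 ≤ a ⊓ ((n + 1) • b) :=
        le_inf ha (nsmul_nonneg hb (n + 1))
      rw [ih, hab, add_zero] at h1
      exact le_antisymm h1 h2

lemma nsmul_semiclosed' (a : G) (n : ℕ) (hn : 0 < n) (h : 0 ≤ n • a) : 0 ≤ a := by
  have hsub : n • a⁻ ≤ n • a⁺ := by
    have : n • a = n • a⁺ - n • a⁻ := by rw [← smul_sub, posPart_sub_negPart]
    rw [this] at h
    exact sub_nonneg.mp h
  have hd : (n • a⁻) ⊓ (n • a⁺) = 0 := by
    have h1 : a⁺ ⊓ (n • a⁻) = 0 :=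
      disjoint_nsmul' _ _ (posPart_nonneg a) (negPart_nonneg a)
        (posPart_inf_negPart_eq_zero a) n
    have h2 : (n • a⁻) ⊓ (n • a⁺) = 0 := by
      rw [inf_comm] at h1
      exact disjoint_nsmul' _ _ (nsmul_nonneg (negPart_nonneg a) n) (posPart_nonneg a) h1 n
    exact h2
  have hz : n • a⁻ = 0 := by
    have := inf_eq_left.mpr hsub
    rw [← this, hd]
  obtain ⟨m, rfl⟩ := Nat.exists_eq_succ_of_ne_zero hn.ne'
  have hle : a⁻ ≤ (m + 1) • a⁻ := by
    rw [succ_nsmul]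
    exact le_add_of_nonneg_left (nsmul_nonneg (negPart_nonneg a) m)
  have hnz : a⁻ = 0 := le_antisymm (hle.trans hz.le) (negPart_nonneg a)
  have := posPart_sub_negPart a
  rw [hnz, sub_zero] at this
  rw [← this]
  exact posPart_nonneg a

end LatticeAux

section SmulAux
set_option linter.unusedSectionVars false

variable {G : Type*} [NormedAddCommGroup G] [Lattice G] [HasSolidNorm G] [IsOrderedAddMonoid G] [NormedSpace ℝ G]

lemma rat_smul_nonneg' (q : ℚ) (hq : 0 ≤ q) (x : G) (hx : 0 ≤ x) : 0 ≤ (q : ℝ) • x := by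
  apply nsmul_semiclosed' _ q.den q.pos
  have h1 : (q.den : ℕ) • ((q : ℝ) • x) = ((q.den : ℝ) * (q : ℝ)) • x := by
    rw [mul_smul, Nat.cast_smul_eq_nsmul]
  have h2 : ((q.den : ℝ) * (q : ℝ)) = (q.num : ℝ) := by
    rw [Rat.cast_def]
    field_simp
  rw [h1, h2, ← Int.toNat_of_nonneg (Rat.num_nonneg.mpr hq), Int.cast_natCast,
    Nat.cast_smul_eq_nsmul]
  exact nsmul_nonneg hx _

lemma real_smul_nonneg' (c : ℝ) (hc : 0 ≤ c) (x : G) (hx : 0 ≤ x) : 0 ≤ c • x := by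
  have hex : ∀ n : ℕ, ∃ q : ℚ, c < (q : ℝ) ∧ (q : ℝ) < c + 1 / (n + 1) := by
    intro n
    exact exists_rat_btwn (lt_add_of_pos_right c (by positivity))
  choose q hq1 hq2 using hex
  have hq : Tendsto (fun n : ℕ => ((q n : ℝ))) atTop (nhds c) := by
    have hup : Tendsto (fun n : ℕ => c + 1 / ((n : ℝ) + 1)) atTop (nhds c) := by
      have := tendsto_one_div_add_atTop_nhds_zero_nat (𝕜 := ℝ)
      simpa using tendsto_const_nhds.add this
    exact tendsto_of_tendsto_of_tendsto_of_le_of_le tendsto_const_nhds hup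
      (fun n => (hq1 n).le) (fun n => (hq2 n).le)
  have hsm : Tendsto (fun n : ℕ => (q n : ℝ) • x) atTop (nhds (c • x)) :=
    hq.smul_const x
  have hmem : ∀ n, (q n : ℝ) • x ∈ {y : G | 0 ≤ y} := by
    intro n
    exact rat_smul_nonneg' (q n) (by exact_mod_cast (hc.trans (hq1 n).le)) x hx
  exact isClosed_nonneg.mem_of_tendsto hsm (Filter.Eventually.of_forall hmem)

lemma smul_le_smul'' {c : ℝ} (hc : 0 ≤ c) {a b : G} (h : a ≤ b) : c • a ≤ c • b := by
  have := real_smul_nonneg' c hc (b - a) (sub_nonneg.mpr h)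
  rw [smul_sub] at this
  exact sub_nonneg.mp this

lemma smul_sup' {c : ℝ} (hc : 0 ≤ c) (a b : G) : c • (a ⊔ b) = c • a ⊔ c • b := by
  rcases eq_or_lt_of_le hc with rfl | hpos
  · simp
  · refine le_antisymm ?_ (sup_le (smul_le_smul'' hc le_sup_left) (smul_le_smul'' hc le_sup_right))
    have h1 : a ⊔ b ≤ c⁻¹ • (c • a ⊔ c • b) := by
      refine sup_le ?_ ?_
      · have := smul_le_smul'' (inv_nonneg.mpr hc) (le_sup_left : c • a ≤ c • a ⊔ c • b)
        rwa [inv_smul_smul₀ hpos.ne'] at this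
      · have := smul_le_smul'' (inv_nonneg.mpr hc) (le_sup_right : c • b ≤ c • a ⊔ c • b)
        rwa [inv_smul_smul₀ hpos.ne'] at this
    have := smul_le_smul'' hc h1
    rwa [smul_inv_smul₀ hpos.ne'] at this

lemma smul_posPart' {c : ℝ} (hc : 0 ≤ c) (a : G) : (c • a)⁺ = c • a⁺ := by
  rw [posPart_def, posPart_def, smul_sup' hc, smul_zero]

lemma smul_negPart' {c : ℝ} (hc : 0 ≤ c) (a : G) : (c • a)⁻ = c • a⁻ := by
  rw [← posPart_neg, ← posPart_neg, ← smul_neg, smul_posPart' hc]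

lemma abs_smul'' {c : ℝ} (hc : 0 ≤ c) (a : G) : |c • a| = c • |a| := by
  rw [abs_eq_sup_neg', abs_eq_sup_neg', smul_sup' hc, smul_neg]

lemma norm_le_norm_of_nonneg_le {a b : G} (ha : 0 ≤ a) (h : a ≤ b) : ‖a‖ ≤ ‖b‖ := by
  apply HasSolidNorm.solid
  rw [abs_of_nonneg ha, abs_of_nonneg (ha.trans h)]
  exact h

end SmulAux


namespace TwoSided

section OpOrder
set_option linter.unusedSectionVars false

variable {E F : Type*}
  [NormedAddCommGroup E] [Lattice E] [HasSolidNorm E] [IsOrderedAddMonoid E] [NormedSpace ℝ E]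
  [NormedAddCommGroup F] [Lattice F] [HasSolidNorm F] [IsOrderedAddMonoid F] [NormedSpace ℝ F]

lemma positive_zero : Positive (0 : E →ₗ[ℝ] F) := fun _ _ => le_rfl

lemma positive_apply_le {P : E →ₗ[ℝ] F} (hP : Positive P) {a b : E} (h : a ≤ b) :
    P a ≤ P b := by
  have := hP (b - a) (sub_nonneg.mpr h)
  rw [map_sub] at this
  exact sub_nonneg.mp this

lemma pos_apply_abs {P : E →ₗ[ℝ] F} (hP : Positive P) (x : E) : |P x| ≤ P |x| := by
  rw [abs_eq_sup_neg']
  refine sup_le (positive_apply_le hP (le_abs_self x)) ?_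
  have := positive_apply_le hP (neg_le_abs x)
  rwa [map_neg] at this

lemma positive_neg_eq_zero {P : E →ₗ[ℝ] F} (h1 : Positive P) (h2 : Positive (-P)) :
    P = 0 := by
  have hz : ∀ y : E, 0 ≤ y → P y = 0 := by
    intro y hy
    have := h2 y hy
    rw [LinearMap.neg_apply] at this
    exact le_antisymm (by rwa [← neg_nonneg]) (h1 y hy)
  ext x
  have : P x = P x⁺ - P x⁻ := by rw [← map_sub, posPart_sub_negPart]
  rw [LinearMap.zero_apply, this, hz _ (posPart_nonneg x), hz _ (negPart_nonneg x), sub_zero]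

lemma positive_half {P : E →ₗ[ℝ] F} (h : Positive (P + P)) : Positive P := by
  intro x hx
  have := h x hx
  rw [LinearMap.add_apply, ← two_nsmul] at this
  exact nsmul_semiclosed' _ 2 two_pos this

lemma isModulus_pos {T M : E →ₗ[ℝ] F} (h : IsModulus T M) : Positive M := by
  apply positive_half
  intro x hx
  have h1 := h.1 x hx
  have h2 := h.2.1 x hx
  have := add_nonneg h1 h2
  convert this using 1
  simp only [LinearMap.add_apply, LinearMap.sub_apply, LinearMap.neg_apply]
  abel

lemma isModulus_unique {T M M' : E →ₗ[ℝ] F} (h : IsModulus T M) (h' : IsModulus T M') :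
    M = M' := by
  have a := h.2.2 M' h'.1 h'.2.1
  have b := h'.2.2 M h.1 h.2.1
  have : M' - M = 0 := positive_neg_eq_zero a (by rwa [neg_sub])
  have := sub_eq_zero.mp this
  exact this.symm

lemma positive_isModulus_self {T : E →ₗ[ℝ] F} (hT : Positive T) : IsModulus T T := by
  refine ⟨by rw [sub_self]; exact positive_zero, ?_, fun V h1 _ => h1⟩
  intro x hx
  rw [LinearMap.sub_apply, LinearMap.neg_apply, sub_neg_eq_add]
  exact add_nonneg (hT x hx) (hT x hx)

lemma positive_isRegular {T : E →ₗ[ℝ] F} (hT : Positive T) : IsRegular T :=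
  ⟨T, 0, hT, positive_zero, by rw [sub_zero]⟩

end OpOrder

section OpNorm
set_option linter.unusedSectionVars false

variable {E F : Type*}
  [NormedAddCommGroup E] [Lattice E] [HasSolidNorm E] [IsOrderedAddMonoid E] [NormedSpace ℝ E]
  [NormedAddCommGroup F] [Lattice F] [HasSolidNorm F] [IsOrderedAddMonoid F] [NormedSpace ℝ F]

lemma opNorm_nonneg (T : E →ₗ[ℝ] F) : 0 ≤ opNorm T :=
  Real.sSup_nonneg (by rintro c ⟨x, -, rfl⟩; exact norm_nonneg _)

lemma opNorm_le_bound (T : E →ₗ[ℝ] F) {C : ℝ} (hC : 0 ≤ C)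
    (h : ∀ x, ‖T x‖ ≤ C * ‖x‖) : opNorm T ≤ C := by
  apply Real.sSup_le _ hC
  rintro c ⟨x, hx, rfl⟩
  calc ‖T x‖ ≤ C * ‖x‖ := h x
    _ ≤ C * 1 := by
        have := mem_closedBall_zero_iff.mp hx
        exact mul_le_mul_of_nonneg_left this hC
    _ = C := mul_one C

lemma bddAbove_opNorm_set (T : E →ₗ[ℝ] F) {C : ℝ} (h : ∀ x, ‖T x‖ ≤ C * ‖x‖) :
    BddAbove ((fun x => ‖T x‖) '' Metric.closedBall (0 : E) 1) := by
  refine ⟨max C 0, ?_⟩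
  rintro c ⟨x, hx, rfl⟩
  calc ‖T x‖ ≤ C * ‖x‖ := h x
    _ ≤ max C 0 * 1 := by
        apply mul_le_mul (le_max_left C 0) (mem_closedBall_zero_iff.mp hx) (norm_nonneg x)
          (le_max_right C 0)
    _ = max C 0 := mul_one _

lemma le_opNorm_of_unit (T : E →ₗ[ℝ] F) {C : ℝ} (h : ∀ x, ‖T x‖ ≤ C * ‖x‖)
    {x : E} (hx : ‖x‖ ≤ 1) : ‖T x‖ ≤ opNorm T :=
  le_csSup (bddAbove_opNorm_set T h) ⟨x, mem_closedBall_zero_iff.mpr hx, rfl⟩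

lemma le_opNorm (T : E →ₗ[ℝ] F) {C : ℝ} (h : ∀ x, ‖T x‖ ≤ C * ‖x‖) (x : E) :
    ‖T x‖ ≤ opNorm T * ‖x‖ := by
  rcases eq_or_ne x 0 with rfl | hx0
  · simp
  · have hxpos : (0:ℝ) < ‖x‖ := norm_pos_iff.mpr hx0
    set u := ‖x‖⁻¹ • x with hu
    have hunorm : ‖u‖ = 1 := by
      rw [hu, norm_smul, Real.norm_eq_abs, abs_of_nonneg (inv_nonneg.mpr hxpos.le),
        inv_mul_cancel₀ hxpos.ne']
    have h1 : ‖T u‖ ≤ opNorm T := le_opNorm_of_unit T h hunorm.le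
    have h2 : ‖T u‖ = ‖x‖⁻¹ * ‖T x‖ := by
      rw [hu, map_smul, norm_smul, Real.norm_eq_abs, abs_of_nonneg (inv_nonneg.mpr hxpos.le)]
    rw [h2] at h1
    calc ‖T x‖ = ‖x‖ * (‖x‖⁻¹ * ‖T x‖) := by field_simp
      _ ≤ ‖x‖ * opNorm T := by
          exact mul_le_mul_of_nonneg_left h1 hxpos.le
      _ = opNorm T * ‖x‖ := mul_comm _ _

lemma opNorm_zero' : opNorm (0 : E →ₗ[ℝ] F) = 0 :=
  le_antisymm (opNorm_le_bound _ le_rfl (by simp)) (opNorm_nonneg _)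

lemma positive_bounded [CompleteSpace E] {T : E →ₗ[ℝ] F} (hT : Positive T) :
    ∃ C, 0 ≤ C ∧ ∀ x, ‖T x‖ ≤ C * ‖x‖ := by
  by_contra hcon
  push_neg at hcon
  have key : ∀ n : ℕ, ∃ y : E, 0 ≤ y ∧ ‖y‖ ≤ 1 ∧ ((n:ℝ)+1) * 2^n < ‖T y‖ := by
    intro n
    obtain ⟨x, hx⟩ := hcon (((n:ℝ)+1) * 2^n) (by positivity)
    have hx0 : x ≠ 0 := by
      rintro rfl
      simp at hx
    have hxpos : (0:ℝ) < ‖x‖ := norm_pos_iff.mpr hx0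
    refine ⟨‖x‖⁻¹ • |x|, real_smul_nonneg' _ (inv_nonneg.mpr hxpos.le) _ (abs_nonneg x), ?_, ?_⟩
    · rw [norm_smul, Real.norm_eq_abs, abs_of_nonneg (inv_nonneg.mpr hxpos.le),
        norm_abs_eq_norm, inv_mul_cancel₀ hxpos.ne']
    · have hTx : ‖T x‖ ≤ ‖T |x|‖ := by
        apply HasSolidNorm.solid
        rw [abs_of_nonneg (hT _ (abs_nonneg x))]
        exact pos_apply_abs hT x
      have : ((n:ℝ)+1) * 2^n * ‖x‖ < ‖T |x|‖ := lt_of_lt_of_le hx hTx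
      rw [map_smul, norm_smul, Real.norm_eq_abs, abs_of_nonneg (inv_nonneg.mpr hxpos.le)]
      rw [← lt_div_iff₀ hxpos] at this
      rwa [div_eq_inv_mul] at this
  choose y hy0 hy1 hy2 using key
  set g : ℕ → E := fun n => (2⁻¹:ℝ)^n • y n with hg
  have hgnorm : ∀ n, ‖g n‖ ≤ (2⁻¹:ℝ)^n := by
    intro n
    rw [hg]
    simp only [norm_smul, Real.norm_eq_abs, abs_pow, abs_of_nonneg (by norm_num : (0:ℝ) ≤ 2⁻¹)]
    calc (2⁻¹:ℝ)^n * ‖y n‖ ≤ (2⁻¹:ℝ)^n * 1 := by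
          exact mul_le_mul_of_nonneg_left (hy1 n) (by positivity)
      _ = (2⁻¹:ℝ)^n := mul_one _
  have hgsum : Summable g := by
    apply Summable.of_norm
    apply Summable.of_nonneg_of_le (fun n => norm_nonneg _) hgnorm
    exact summable_geometric_of_lt_one (by norm_num) (by norm_num)
  have hgpos : ∀ n, 0 ≤ g n := fun n =>
    real_smul_nonneg' _ (by positivity) _ (hy0 n)
  set x := ∑' n, g n with hx
  have hle : ∀ n, g n ≤ x := fun n => hgsum.le_tsum n (fun j _ => hgpos j)
  have hTbig : ∀ n : ℕ, ((n:ℝ)+1) < ‖T x‖ := by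
    intro n
    have h1 : T (g n) ≤ T x := positive_apply_le hT (hle n)
    have h2 : 0 ≤ T (g n) := hT _ (hgpos n)
    have h3 : ‖T (g n)‖ ≤ ‖T x‖ := norm_le_norm_of_nonneg_le h2 h1
    have h4 : ((n:ℝ)+1) < ‖T (g n)‖ := by
      have : ‖T (g n)‖ = (2⁻¹:ℝ)^n * ‖T (y n)‖ := by
        rw [hg]
        simp [norm_smul, abs_of_nonneg (by norm_num : (0:ℝ) ≤ 2⁻¹), abs_pow]
      rw [this]
      have := hy2 n
      have hcalc : ((n:ℝ)+1) = (2⁻¹:ℝ)^n * (((n:ℝ)+1) * 2^n) := by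
        rw [← mul_assoc, mul_comm ((2⁻¹:ℝ)^n), mul_assoc, ← mul_pow]
        norm_num
      rw [hcalc]
      exact mul_lt_mul_of_pos_left this (by positivity)
    exact lt_of_lt_of_le h4 h3
  obtain ⟨n, hn⟩ := exists_nat_gt ‖T x‖
  have := hTbig n
  have : ‖T x‖ < ‖T x‖ := lt_trans hn (lt_of_le_of_lt (by linarith) this)
  exact lt_irrefl _ this

lemma positive_opNorm_le {M N : E →ₗ[ℝ] F} (hM : Positive M) (hMN : Positive (N - M))
    {C : ℝ} (hNb : ∀ x, ‖N x‖ ≤ C * ‖x‖) : opNorm M ≤ opNorm N := by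
  have hN : Positive N := by
    intro x hx
    have h : M x ≤ N x := by simpa [LinearMap.sub_apply] using hMN x hx
    exact le_trans (hM x hx) h
  apply opNorm_le_bound _ (opNorm_nonneg N)
  intro x
  have h1 : |M x| ≤ N |x| := by
    refine le_trans (pos_apply_abs hM x) ?_
    have := hMN |x| (abs_nonneg x)
    rw [LinearMap.sub_apply] at this
    exact sub_nonneg.mp this
  have h2 : ‖M x‖ ≤ ‖N |x|‖ := by
    apply HasSolidNorm.solid
    rwa [abs_of_nonneg (hN _ (abs_nonneg x))]
  calc ‖M x‖ ≤ ‖N |x|‖ := h2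
    _ ≤ opNorm N * ‖|x|‖ := le_opNorm N hNb _
    _ = opNorm N * ‖x‖ := by rw [norm_abs_eq_norm]

lemma regNorm_eq {T M : E →ₗ[ℝ] F} (h : IsModulus T M) : regNorm T = opNorm M := by
  have hset : {c | ∃ M' : E →ₗ[ℝ] F, IsModulus T M' ∧ c = opNorm M'} = {opNorm M} := by
    ext c
    constructor
    · rintro ⟨M', hM', rfl⟩
      rw [isModulus_unique hM' h]
      rfl
    · rintro rfl
      exact ⟨M, h, rfl⟩
  rw [regNorm, hset, csSup_singleton]

lemma regNorm_zero' : regNorm (0 : E →ₗ[ℝ] F) = 0 := by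
  rw [regNorm_eq (positive_isModulus_self positive_zero), opNorm_zero']

end OpNorm

end TwoSided


namespace TwoSided

section RK
set_option linter.unusedSectionVars false

variable {E F : Type*}
  [NormedAddCommGroup E] [Lattice E] [HasSolidNorm E] [IsOrderedAddMonoid E] [NormedSpace ℝ E]
  [NormedAddCommGroup F] [Lattice F] [HasSolidNorm F] [IsOrderedAddMonoid F] [NormedSpace ℝ F]

lemma riesz_decomp {v x y : E} (hx : 0 ≤ x) (hy : 0 ≤ y)
    (h1 : -(x + y) ≤ v) (h2 : v ≤ x + y) :
    ∃ v₁ v₂ : E, v = v₁ + v₂ ∧ -x ≤ v₁ ∧ v₁ ≤ x ∧ -y ≤ v₂ ∧ v₂ ≤ y := by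
  have hcompute : v - ((v ⊓ x) ⊔ -x) = (0 ⊔ (v - x)) ⊓ (v + x) := by
    rw [sub_sup, sub_inf, sub_self, sub_neg_eq_add]
  refine ⟨(v ⊓ x) ⊔ -x, v - ((v ⊓ x) ⊔ -x), by abel, le_sup_right,
    sup_le inf_le_right ((neg_nonpos.mpr hx).trans hx), ?_, ?_⟩
  · rw [hcompute]
    refine le_inf (le_trans (neg_nonpos.mpr hy) le_sup_left) ?_
    calc -y = -(x + y) + x := by abel
      _ ≤ v + x := add_le_add h1 le_rfl
  · rw [hcompute]
    refine le_trans inf_le_left (sup_le hy ?_)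
    calc v - x ≤ (x + y) - x := sub_le_sub_right h2 x
      _ = y := by abel

lemma exists_modulus (hF : DedekindComplete F) {T : E →ₗ[ℝ] F} (hT : IsRegular T) :
    ∃ M, IsModulus T M := by
  obtain ⟨P, Q, hP, hQ, hPQ⟩ := hT
  set S : E → Set F := fun x => (fun v => T v) '' {v : E | -x ≤ v ∧ v ≤ x} with hSdef
  have hmem0 : ∀ x : E, 0 ≤ x → (0:F) ∈ S x := fun x hx =>
    ⟨0, ⟨neg_nonpos.mpr hx, hx⟩, map_zero T⟩
  have hbdd : ∀ x : E, 0 ≤ x → BddAbove (S x) := by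
    intro x hx
    refine ⟨P x + Q x, ?_⟩
    rintro _ ⟨v, ⟨hv1, hv2⟩, rfl⟩
    dsimp only
    have e : T v = P v - Q v := by rw [hPQ]; simp
    have h1 : P v ≤ P x := positive_apply_le hP hv2
    have h2 : -(Q v) ≤ Q x := by
      have := positive_apply_le hQ (neg_le.mp hv1)
      rwa [map_neg] at this
    rw [e]
    calc P v - Q v = P v + -(Q v) := by abel
      _ ≤ P x + Q x := add_le_add h1 h2
  have hex : ∀ x : E, 0 ≤ x → ∃ a, IsLUB (S x) a := fun x hx =>
    hF (S x) ⟨0, hmem0 x hx⟩ (hbdd x hx)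
  choose! s hs using hex
  have s_le : ∀ x, 0 ≤ x → ∀ v, -x ≤ v → v ≤ x → T v ≤ s x := fun x hx v h1 h2 =>
    (hs x hx).1 ⟨v, ⟨h1, h2⟩, rfl⟩
  have sT : ∀ x, 0 ≤ x → T x ≤ s x := fun x hx =>
    s_le x hx x (neg_nonpos.mpr hx |>.trans hx) le_rfl
  have sTn : ∀ x, 0 ≤ x → -(T x) ≤ s x := by
    intro x hx
    have := s_le x hx (-x) (neg_le_neg le_rfl) ((neg_nonpos.mpr hx).trans hx)
    rwa [map_neg] at this
  have s_zero : s 0 = 0 := by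
    have h := hs 0 le_rfl
    have hset : S 0 = {0} := by
      ext z
      constructor
      · rintro ⟨v, ⟨a1, a2⟩, rfl⟩
        have : v = 0 := le_antisymm a2 (by simpa using a1)
        simp [this]
      · rintro rfl
        exact hmem0 0 le_rfl
    rw [hset] at h
    exact h.unique isLUB_singleton
  have s_add : ∀ x y, 0 ≤ x → 0 ≤ y → s (x + y) = s x + s y := by
    intro x y hx hy
    have hxy : 0 ≤ x + y := add_nonneg hx hy
    refine ((hs (x+y) hxy).unique ?_)
    constructor
    · rintro _ ⟨v, ⟨h1, h2⟩, rfl⟩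
      obtain ⟨v₁, v₂, rfl, a1, a2, b1, b2⟩ := riesz_decomp hx hy h1 h2
      dsimp only
      rw [map_add]
      exact add_le_add (s_le x hx v₁ a1 a2) (s_le y hy v₂ b1 b2)
    · intro u hu
      have hx' : s x ≤ u - s y := by
        apply (hs x hx).2
        rintro _ ⟨v₁, ⟨a1, a2⟩, rfl⟩
        rw [le_sub_comm]
        apply (hs y hy).2
        rintro _ ⟨v₂, ⟨b1, b2⟩, rfl⟩
        rw [le_sub_iff_add_le, ← map_add]
        refine hu ⟨v₂ + v₁, ⟨?_, ?_⟩, rfl⟩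
        · calc -(x + y) = -y + -x := by abel
            _ ≤ v₂ + v₁ := add_le_add b1 a1
        · calc v₂ + v₁ ≤ y + x := add_le_add b2 a2
            _ = x + y := by abel
      calc s x + s y ≤ (u - s y) + s y := add_le_add hx' le_rfl
        _ = u := by abel
  have s_smul : ∀ (c : ℝ), 0 ≤ c → ∀ x, 0 ≤ x → s (c • x) = c • s x := by
    intro c hc x hx
    rcases eq_or_lt_of_le hc with rfl | hcpos
    · rw [zero_smul, zero_smul, s_zero]
    · have hcx : 0 ≤ c • x := real_smul_nonneg' c hc x hx
      refine (hs _ hcx).unique ?_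
      constructor
      · rintro _ ⟨v, ⟨h1, h2⟩, rfl⟩
        have k1 : -x ≤ c⁻¹ • v := by
          have := smul_le_smul'' (inv_nonneg.mpr hc) h1
          rwa [smul_neg, inv_smul_smul₀ hcpos.ne'] at this
        have k2 : c⁻¹ • v ≤ x := by
          have := smul_le_smul'' (inv_nonneg.mpr hc) h2
          rwa [inv_smul_smul₀ hcpos.ne'] at this
        have e : T v = c • T (c⁻¹ • v) := by
          rw [map_smul, smul_smul, mul_inv_cancel₀ hcpos.ne', one_smul]
        dsimp only
        rw [e]
        exact smul_le_smul'' hc (s_le x hx _ k1 k2)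
      · intro u hu
        have key : s x ≤ c⁻¹ • u := by
          apply (hs x hx).2
          rintro _ ⟨v, ⟨h1, h2⟩, rfl⟩
          have m1 : -(c • x) ≤ c • v := by
            have := smul_le_smul'' hc h1
            rwa [smul_neg] at this
          have m2 : c • v ≤ c • x := smul_le_smul'' hc h2
          have hle := hu ⟨c • v, ⟨m1, m2⟩, rfl⟩
          dsimp only at hle ⊢
          have e : T v = c⁻¹ • T (c • v) := by
            rw [map_smul, smul_smul, inv_mul_cancel₀ hcpos.ne', one_smul]
          rw [e]
          exact smul_le_smul'' (inv_nonneg.mpr hc) hle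
        have := smul_le_smul'' hc key
        rwa [smul_inv_smul₀ hcpos.ne'] at this
  set Mfun : E → F := fun x => s x⁺ - s x⁻ with hMfun
  have hMadd : ∀ a b : E, Mfun (a + b) = Mfun a + Mfun b := by
    intro a b
    have e1 : (a+b)⁺ - (a+b)⁻ = (a⁺ + b⁺) - (a⁻ + b⁻) := by
      rw [posPart_sub_negPart,
        show (a⁺ + b⁺) - (a⁻ + b⁻) = (a⁺ - a⁻) + (b⁺ - b⁻) by abel,
        posPart_sub_negPart, posPart_sub_negPart]
    have e2 : (a+b)⁺ + (a⁻ + b⁻) = (a⁺ + b⁺) + (a+b)⁻ := sub_eq_sub_iff_add_eq_add.mp e1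
    have e3 : s ((a+b)⁺ + (a⁻ + b⁻)) = s ((a⁺ + b⁺) + (a+b)⁻) := by rw [e2]
    rw [s_add _ _ (posPart_nonneg _) (add_nonneg (negPart_nonneg a) (negPart_nonneg b)),
      s_add _ _ (add_nonneg (posPart_nonneg a) (posPart_nonneg b)) (negPart_nonneg _),
      s_add _ _ (negPart_nonneg a) (negPart_nonneg b),
      s_add _ _ (posPart_nonneg a) (posPart_nonneg b)] at e3
    show s (a+b)⁺ - s (a+b)⁻ = (s a⁺ - s a⁻) + (s b⁺ - s b⁻)
    rw [show (s a⁺ - s a⁻) + (s b⁺ - s b⁻) = (s a⁺ + s b⁺) - (s a⁻ + s b⁻) by abel,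
      sub_eq_sub_iff_add_eq_add]
    calc s (a+b)⁺ + (s a⁻ + s b⁻) = s a⁺ + s b⁺ + s (a+b)⁻ := e3
      _ = (s a⁺ + s b⁺) + s (a+b)⁻ := by abel
  have hMsmul : ∀ (c : ℝ) (a : E), Mfun (c • a) = c • Mfun a := by
    intro c a
    rcases le_or_gt 0 c with hc | hc
    · show s (c • a)⁺ - s (c • a)⁻ = c • (s a⁺ - s a⁻)
      rw [smul_posPart' hc, smul_negPart' hc, s_smul c hc _ (posPart_nonneg a),
        s_smul c hc _ (negPart_nonneg a), smul_sub]
    · have hd : (0:ℝ) ≤ -c := by linarith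
      have e : c • a = -((-c) • a) := by rw [neg_smul, neg_neg]
      show s (c • a)⁺ - s (c • a)⁻ = c • (s a⁺ - s a⁻)
      rw [e, posPart_neg, negPart_neg, smul_posPart' hd, smul_negPart' hd,
        s_smul _ hd _ (negPart_nonneg a), s_smul _ hd _ (posPart_nonneg a),
        neg_smul, neg_smul, smul_sub]
      abel
  set M : E →ₗ[ℝ] F :=
    { toFun := Mfun, map_add' := hMadd, map_smul' := hMsmul } with hMdef
  have hMx : ∀ x : E, 0 ≤ x → M x = s x := by
    intro x hx
    show Mfun x = s x
    rw [hMfun]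
    dsimp only
    rw [posPart_of_nonneg hx, negPart_of_nonneg hx, s_zero, sub_zero]
  refine ⟨M, ?_, ?_, ?_⟩
  · intro x hx
    rw [LinearMap.sub_apply, hMx x hx]
    exact sub_nonneg.mpr (sT x hx)
  · intro x hx
    rw [LinearMap.sub_apply, LinearMap.neg_apply, sub_neg_eq_add, hMx x hx]
    have := sTn x hx
    calc (0:F) = -(T x) + T x := by abel
      _ ≤ s x + T x := add_le_add this le_rfl
  · intro V h1 h2 x hx
    have hVpos : Positive V := by
      apply positive_half
      intro z hz
      have a1 := h1 z hz
      have a2 := h2 z hz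
      rw [LinearMap.sub_apply] at a1
      rw [LinearMap.sub_apply, LinearMap.neg_apply, sub_neg_eq_add] at a2
      have := add_nonneg a1 a2
      rw [LinearMap.add_apply]
      calc (0:F) ≤ (V z - T z) + (V z + T z) := this
        _ = V z + V z := by abel
    rw [LinearMap.sub_apply, hMx x hx, sub_nonneg]
    apply (hs x hx).2
    rintro _ ⟨v, ⟨a1, a2⟩, rfl⟩
    have c1 : T v⁺ ≤ V v⁺ := by
      have := h1 v⁺ (posPart_nonneg v)
      rw [LinearMap.sub_apply] at this
      exact sub_nonneg.mp this
    have c2 : -(T v⁻) ≤ V v⁻ := by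
      have := h2 v⁻ (negPart_nonneg v)
      rw [LinearMap.sub_apply, LinearMap.neg_apply, sub_neg_eq_add, ← sub_neg_eq_add] at this
      exact sub_nonneg.mp this
    have habs : |v| ≤ x := by
      rw [abs_eq_sup_neg']
      exact sup_le a2 (neg_le.mp a1)
    calc T v = T v⁺ - T v⁻ := by rw [← map_sub, posPart_sub_negPart]
      _ = T v⁺ + -(T v⁻) := by abel
      _ ≤ V v⁺ + V v⁻ := add_le_add c1 c2
      _ = V (v⁺ + v⁻) := (map_add V _ _).symm
      _ = V |v| := by rw [posPart_add_negPart]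
      _ ≤ V x := positive_apply_le hVpos habs

end RK

end TwoSided


namespace TwoSided

section Norming
set_option linter.unusedSectionVars false

variable {E : Type*} [NormedAddCommGroup E] [Lattice E] [HasSolidNorm E] [IsOrderedAddMonoid E] [NormedSpace ℝ E]

lemma posPart_le_abs' (z : E) : z⁺ ≤ |z| := by
  rw [← posPart_add_negPart z]
  exact le_add_of_nonneg_right (negPart_nonneg z)

lemma negPart_le_abs' (z : E) : z⁻ ≤ |z| := by
  rw [← posPart_add_negPart z]
  exact le_add_of_nonneg_left (posPart_nonneg z)

lemma exists_norming (x : E) (hx : 0 ≤ x) :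
    ∃ f : E →ₗ[ℝ] ℝ, Positive f ∧ (∀ z, |f z| ≤ ‖z‖) ∧ f x = ‖x‖ := by
  rcases eq_or_ne x 0 with rfl | hx0
  · exact ⟨0, positive_zero, by simp, by simp⟩
  set N : E → ℝ := fun z => ‖z⁺‖ with hN
  have N_hom : ∀ c : ℝ, 0 < c → ∀ z, N (c • z) = c * N z := by
    intro c hc z
    simp only [hN]
    rw [smul_posPart' hc.le, norm_smul, Real.norm_eq_abs, abs_of_nonneg hc.le]
  have N_add : ∀ y z : E, N (y + z) ≤ N y + N z := by
    intro y z
    simp only [hN]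
    calc ‖(y+z)⁺‖ ≤ ‖y⁺ + z⁺‖ :=
          norm_le_norm_of_nonneg_le (posPart_nonneg _) (posPart_add_le' y z)
      _ ≤ ‖y⁺‖ + ‖z⁺‖ := norm_add_le _ _
  set f0 : E →ₗ.[ℝ] ℝ := LinearPMap.mkSpanSingleton x ‖x‖ hx0 with hf0
  have hf0le : ∀ z : f0.domain, f0 z ≤ N z.1 := by
    rintro ⟨z, hz⟩
    have hz' : z ∈ Submodule.span ℝ {x} := hz
    obtain ⟨c, rfl⟩ := Submodule.mem_span_singleton.mp hz'
    have happ : f0 ⟨c • x, hz⟩ = c • ‖x‖ := LinearPMap.mkSpanSingleton'_apply x ‖x‖ _ c _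
    rw [happ]
    rcases le_or_gt 0 c with hc | hc
    · simp only [hN]
      rw [smul_posPart' hc, posPart_of_nonneg hx, norm_smul, Real.norm_eq_abs,
        abs_of_nonneg hc, smul_eq_mul]
    · have hcx : c • x ≤ 0 := by
        have h' : 0 ≤ (-c) • x := real_smul_nonneg' (-c) (by linarith) x hx
        rw [neg_smul] at h'
        exact neg_nonneg.mp h'
      have hp : (c • x)⁺ = 0 := posPart_eq_zero.mpr hcx
      simp only [hN, hp, norm_zero, smul_eq_mul]
      nlinarith [norm_nonneg x]
  obtain ⟨g, hg_ext, hg_le⟩ := exists_extension_of_le_sublinear f0 N N_hom N_add hf0le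
  refine ⟨g, ?_, ?_, ?_⟩
  · intro z hz
    have h := hg_le (-z)
    simp only [hN] at h
    rw [posPart_neg, negPart_of_nonneg hz, norm_zero, map_neg] at h
    linarith
  · intro z
    have h1 : g z ≤ ‖z‖ := by
      refine (hg_le z).trans ?_
      simp only [hN]
      calc ‖z⁺‖ ≤ ‖|z|‖ := norm_le_norm_of_nonneg_le (posPart_nonneg z) (posPart_le_abs' z)
        _ = ‖z‖ := norm_abs_eq_norm z
    have h2 : -(g z) ≤ ‖z‖ := by
      have h := hg_le (-z)
      simp only [hN] at h
      rw [map_neg, posPart_neg] at h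
      refine h.trans ?_
      calc ‖z⁻‖ ≤ ‖|z|‖ := norm_le_norm_of_nonneg_le (negPart_nonneg z) (negPart_le_abs' z)
        _ = ‖z‖ := norm_abs_eq_norm z
    rw [abs_le]
    exact ⟨by linarith, h1⟩
  · have hmem : x ∈ f0.domain := by
      rw [hf0, LinearPMap.domain_mkSpanSingleton]
      exact Submodule.mem_span_singleton_self x
    have := hg_ext ⟨x, hmem⟩
    rw [LinearPMap.mkSpanSingleton'_apply_self] at this
    exact this

end Norming

end TwoSided


namespace TwoSided

section Comp
set_option linter.unusedSectionVars false

variable {E F G : Type*}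
  [NormedAddCommGroup E] [Lattice E] [HasSolidNorm E] [IsOrderedAddMonoid E] [NormedSpace ℝ E]
  [NormedAddCommGroup F] [Lattice F] [HasSolidNorm F] [IsOrderedAddMonoid F] [NormedSpace ℝ F]
  [NormedAddCommGroup G] [Lattice G] [HasSolidNorm G] [IsOrderedAddMonoid G] [NormedSpace ℝ G]

lemma positive_comp {A : F →ₗ[ℝ] G} {T : E →ₗ[ℝ] F} (hA : Positive A) (hT : Positive T) :
    Positive (A ∘ₗ T) := fun x hx => hA _ (hT _ hx)

end Comp

end TwoSided


open TwoSided in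
theorem statement6 {W X Y Z : Type*}
    [NormedAddCommGroup W] [Lattice W] [HasSolidNorm W] [IsOrderedAddMonoid W] [NormedSpace ℝ W] [CompleteSpace W]
    [NormedAddCommGroup X] [Lattice X] [HasSolidNorm X] [IsOrderedAddMonoid X] [NormedSpace ℝ X] [CompleteSpace X]
    [NormedAddCommGroup Y] [Lattice Y] [HasSolidNorm Y] [IsOrderedAddMonoid Y] [NormedSpace ℝ Y] [CompleteSpace Y]
    [NormedAddCommGroup Z] [Lattice Z] [HasSolidNorm Z] [IsOrderedAddMonoid Z] [NormedSpace ℝ Z] [CompleteSpace Z]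
    (hX : DedekindComplete X) (hY : DedekindComplete Y) (hZ : DedekindComplete Z)
    (A : Y →ₗ[ℝ] Z) (hA : Positive A) (B : W →ₗ[ℝ] X) (hB : Positive B) :
    opNorm2 (MAB A B) = opNorm A * opNorm B := by
  classical
  obtain ⟨CA, hCA0, hCA⟩ := positive_bounded hA
  obtain ⟨CB, hCB0, hCB⟩ := positive_bounded hB
  set S : Set ℝ := (fun T : X →ₗ[ℝ] Y => regNorm ((MAB A B) T)) ''
    {T : X →ₗ[ℝ] Y | IsRegular T ∧ regNorm T ≤ 1} with hSdef
  have hopN2 : opNorm2 (MAB A B) = sSup S := rfl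
  have hK0 : 0 ≤ opNorm A * opNorm B := mul_nonneg (opNorm_nonneg A) (opNorm_nonneg B)
  have h0S : (0:ℝ) ∈ S := by
    refine ⟨0, ⟨positive_isRegular positive_zero, ?_⟩, ?_⟩
    · rw [regNorm_zero']; norm_num
    · show regNorm ((MAB A B) 0) = 0
      rw [map_zero, regNorm_zero']
  have hub : ∀ c ∈ S, c ≤ opNorm A * opNorm B := by
    rintro _ ⟨T, ⟨hreg, hrn⟩, rfl⟩
    dsimp only
    obtain ⟨N, hN⟩ := exists_modulus hY hreg
    have hNpos : Positive N := isModulus_pos hN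
    obtain ⟨CN, hCN0, hCN⟩ := positive_bounded hNpos
    have hrnN : opNorm N ≤ 1 := by rw [← regNorm_eq hN]; exact hrn
    obtain ⟨P, Q, hP, hQ, hPQ⟩ := hreg
    have hreg2 : IsRegular ((MAB A B) T) := by
      refine ⟨A ∘ₗ P ∘ₗ B, A ∘ₗ Q ∘ₗ B, positive_comp hA (positive_comp hP hB),
        positive_comp hA (positive_comp hQ hB), ?_⟩
      show A ∘ₗ T ∘ₗ B = _
      rw [hPQ]; ext w; simp
    obtain ⟨M, hM⟩ := exists_modulus hZ hreg2
    have hMpos : Positive M := isModulus_pos hM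
    rw [regNorm_eq hM]
    have h1 : Positive ((A ∘ₗ N ∘ₗ B) - (MAB A B) T) := by
      intro x hx
      have h2' := hN.1 (B x) (hB x hx)
      rw [LinearMap.sub_apply] at h2'
      have h3 : (0:Z) ≤ A (N (B x) - T (B x)) := hA _ h2'
      rw [map_sub] at h3
      exact h3
    have h2 : Positive ((A ∘ₗ N ∘ₗ B) - -((MAB A B) T)) := by
      intro x hx
      have h2' := hN.2.1 (B x) (hB x hx)
      rw [LinearMap.sub_apply, LinearMap.neg_apply, sub_neg_eq_add] at h2'
      have h3 : (0:Z) ≤ A (N (B x) + T (B x)) := hA _ h2'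
      rw [map_add] at h3
      show (0:Z) ≤ A (N (B x)) - -(A (T (B x)))
      rwa [sub_neg_eq_add]
    have hVM : Positive ((A ∘ₗ N ∘ₗ B) - M) := hM.2.2 _ h1 h2
    have hANB : ∀ x, ‖(A ∘ₗ N ∘ₗ B) x‖ ≤ (opNorm A * (opNorm N * opNorm B)) * ‖x‖ := by
      intro x
      calc ‖A (N (B x))‖ ≤ opNorm A * ‖N (B x)‖ := le_opNorm A hCA _
        _ ≤ opNorm A * (opNorm N * ‖B x‖) :=
            mul_le_mul_of_nonneg_left (le_opNorm N hCN _) (opNorm_nonneg A)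
        _ ≤ opNorm A * (opNorm N * (opNorm B * ‖x‖)) := by
            refine mul_le_mul_of_nonneg_left ?_ (opNorm_nonneg A)
            exact mul_le_mul_of_nonneg_left (le_opNorm B hCB x) (opNorm_nonneg N)
        _ = (opNorm A * (opNorm N * opNorm B)) * ‖x‖ := by ring
    calc opNorm M ≤ opNorm (A ∘ₗ N ∘ₗ B) := positive_opNorm_le hMpos hVM hANB
      _ ≤ opNorm A * (opNorm N * opNorm B) := by
          refine opNorm_le_bound _ ?_ hANB
          exact mul_nonneg (opNorm_nonneg A) (mul_nonneg (opNorm_nonneg N) (opNorm_nonneg B))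
      _ ≤ opNorm A * opNorm B := by
          refine mul_le_mul_of_nonneg_left ?_ (opNorm_nonneg A)
          exact mul_le_of_le_one_left (opNorm_nonneg B) hrnN
  have hbdd : BddAbove S := ⟨opNorm A * opNorm B, hub⟩
  have hSup0 : (0:ℝ) ≤ sSup S := le_csSup hbdd h0S
  have hle : sSup S ≤ opNorm A * opNorm B := Real.sSup_le hub hK0
  have key : ∀ y : Y, 0 ≤ y → ‖y‖ ≤ 1 → ∀ w : W, 0 ≤ w → ‖w‖ ≤ 1 →
      ‖A y‖ * ‖B w‖ ≤ sSup S := by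
    intro y hy hy1 w hw hw1
    obtain ⟨f, hfpos, hfle, hfval⟩ := exists_norming (B w) (hB w hw)
    set T : X →ₗ[ℝ] Y := f.smulRight y with hTdef
    have hTpos : Positive T := by
      intro z hz
      show (0:Y) ≤ f z • y
      exact real_smul_nonneg' _ (hfpos z hz) _ hy
    have hTbound : ∀ z, ‖T z‖ ≤ 1 * ‖z‖ := by
      intro z
      show ‖f z • y‖ ≤ 1 * ‖z‖
      rw [norm_smul, Real.norm_eq_abs, one_mul]
      calc |f z| * ‖y‖ ≤ ‖z‖ * 1 := mul_le_mul (hfle z) hy1 (norm_nonneg y) (norm_nonneg z)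
        _ = ‖z‖ := mul_one _
    have hTrn : regNorm T ≤ 1 := by
      rw [regNorm_eq (positive_isModulus_self hTpos)]
      exact opNorm_le_bound _ zero_le_one hTbound
    have hMABT : (MAB A B) T = (f ∘ₗ B).smulRight (A y) := by
      ext z
      show A (f (B z) • y) = f (B z) • A y
      rw [map_smul]
    have hPhipos : Positive ((f ∘ₗ B).smulRight (A y)) := fun z hz =>
      real_smul_nonneg' _ (hfpos _ (hB z hz)) _ (hA y hy)
    have hPhib : ∀ z, ‖((f ∘ₗ B).smulRight (A y)) z‖ ≤ (CB * ‖A y‖) * ‖z‖ := by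
      intro z
      show ‖f (B z) • A y‖ ≤ _
      rw [norm_smul, Real.norm_eq_abs]
      calc |f (B z)| * ‖A y‖ ≤ (CB * ‖z‖) * ‖A y‖ :=
            mul_le_mul_of_nonneg_right ((hfle (B z)).trans (hCB z)) (norm_nonneg _)
        _ = (CB * ‖A y‖) * ‖z‖ := by ring
    have hmemS : regNorm ((MAB A B) T) ∈ S := ⟨T, ⟨positive_isRegular hTpos, hTrn⟩, rfl⟩
    have hlow : ‖A y‖ * ‖B w‖ ≤ regNorm ((MAB A B) T) := by
      rw [hMABT, regNorm_eq (positive_isModulus_self hPhipos)]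
      have hval : ‖((f ∘ₗ B).smulRight (A y)) w‖ = ‖B w‖ * ‖A y‖ := by
        show ‖f (B w) • A y‖ = _
        rw [norm_smul, Real.norm_eq_abs, hfval, abs_of_nonneg (norm_nonneg (B w))]
      have h := le_opNorm_of_unit ((f ∘ₗ B).smulRight (A y)) hPhib hw1
      rw [hval] at h
      rw [mul_comm]
      exact h
    exact hlow.trans (le_csSup hbdd hmemS)
  have step2 : ∀ w : W, 0 ≤ w → ‖w‖ ≤ 1 → opNorm A * ‖B w‖ ≤ sSup S := by
    intro w hw hw1
    rcases eq_or_lt_of_le (norm_nonneg (B w)) with h0 | hpos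
    · rw [← h0, mul_zero]
      exact hSup0
    · rw [← le_div_iff₀ hpos]
      show sSup ((fun x => ‖A x‖) '' Metric.closedBall (0 : Y) 1) ≤ sSup S / ‖B w‖
      apply Real.sSup_le
      · rintro _ ⟨x, hxball, rfl⟩
        have hx1 : ‖x‖ ≤ 1 := mem_closedBall_zero_iff.mp hxball
        have h1 : ‖A x‖ ≤ ‖A |x|‖ := by
          apply HasSolidNorm.solid
          rw [abs_of_nonneg (hA _ (abs_nonneg x))]
          exact pos_apply_abs hA x
        have h2 := key |x| (abs_nonneg x) (by rwa [norm_abs_eq_norm]) w hw hw1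
        exact h1.trans ((le_div_iff₀ hpos).mpr h2)
      · exact div_nonneg hSup0 hpos.le
  have hge : opNorm A * opNorm B ≤ sSup S := by
    rcases eq_or_lt_of_le (opNorm_nonneg A) with h0 | hApos
    · rw [← h0, zero_mul]
      exact hSup0
    · rw [mul_comm, ← le_div_iff₀ hApos]
      show sSup ((fun x => ‖B x‖) '' Metric.closedBall (0 : W) 1) ≤ sSup S / opNorm A
      apply Real.sSup_le
      · rintro _ ⟨x, hxball, rfl⟩
        have hx1 : ‖x‖ ≤ 1 := mem_closedBall_zero_iff.mp hxball
        have h1 : ‖B x‖ ≤ ‖B |x|‖ := by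
          apply HasSolidNorm.solid
          rw [abs_of_nonneg (hB _ (abs_nonneg x))]
          exact pos_apply_abs hB x
        have h2 := step2 |x| (abs_nonneg x) (by rwa [norm_abs_eq_norm])
        rw [mul_comm] at h2
        exact h1.trans ((le_div_iff₀ hApos).mpr h2)
      · exact div_nonneg hSup0 hApos.le
  rw [hopN2]
  exact le_antisymm hle hge
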